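/- Let m, i ∈ ℕ^n with m ≠ i, let p_0, q_0 ∈ F∖{0}, and set p = α^m + p_0·α^i and q = α^m + q_0·α^i. Then for every k ∈ ℤ: k ∈ Spr_σ(p,q) if and only if λ_1^{k(m_1−i_1)}·λ_2^{k(m_2−i_2)}···λ_n^{k(m_n−i_n)} = p_0/q_0. Moreover, in that case the (unique) scalar c ∈ F∖{0} with σ^k(p) = c·q is c = λ_1^{k m_1}···λ_n^{k m_n}. -/

import Mathlib

open MvPolynomial


lemma auxC {F : Type*} [Field F] {n : ℕ}
    (e : MvPolynomial (Fin n) F ≃ₐ[F] MvPolynomial (Fin n) F) (a : F) :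
    e (C a) = C a := by
  simpa [MvPolynomial.algebraMap_eq] using e.commutes a

lemma auxX {F : Type*} [Field F] {n : ℕ}
    (lam : Fin n → F) (hlam : ∀ i, lam i ≠ 0)
    (σ : MvPolynomial (Fin n) F ≃ₐ[F] MvPolynomial (Fin n) F)
    (hσ : ∀ i, σ (X i) = C (lam i) * X i)
    (k : ℤ) (t : Fin n) : (σ ^ k) (X t) = C (lam t ^ k) * X t := by
  have hinv : ∀ t, σ⁻¹ (X t) = C (lam t)⁻¹ * X t := by
    intro t
    apply σ.injective
    show σ (σ.symm (X t)) = _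
    rw [AlgEquiv.apply_symm_apply, map_mul, hσ, auxC, ← mul_assoc, ← map_mul,
      inv_mul_cancel₀ (hlam t), map_one, one_mul]
  induction k using Int.induction_on with
  | zero => simp
  | succ j ih =>
      rw [show ((j : ℤ) + 1) = (j + 1 : ℤ) from rfl, zpow_add_one σ,
        AlgEquiv.mul_apply, hσ, map_mul, ih, auxC, ← mul_assoc, ← map_mul,
        zpow_add_one₀ (hlam t), mul_comm (lam t)]
  | pred j ih =>
      rw [show ((-j : ℤ) - 1) = (-1) + (-j : ℤ) by ring, zpow_add σ,
        AlgEquiv.mul_apply, zpow_neg_one, ih, map_mul, auxC, hinv, ← mul_assoc, ← map_mul]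
      congr 2
      rw [← zpow_neg_one, ← zpow_add₀ (hlam t)]
      ring_nf

lemma auxMon {F : Type*} [Field F] {n : ℕ}
    (lam : Fin n → F) (hlam : ∀ i, lam i ≠ 0)
    (σ : MvPolynomial (Fin n) F ≃ₐ[F] MvPolynomial (Fin n) F)
    (hσ : ∀ i, σ (X i) = C (lam i) * X i)
    (k : ℤ) (d : Fin n →₀ ℕ) (a : F) :
    (σ ^ k) (monomial d a) = monomial d ((∏ t, lam t ^ (k * (d t : ℤ))) * a) := by
  rw [monomial_eq, map_mul, auxC]
  rw [Finsupp.prod_fintype _ _ (fun t => pow_zero (X t)), map_prod]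
  have h : ∀ t : Fin n, (σ ^ k) (X t ^ d t) = C (lam t ^ (k * (d t : ℤ))) * X t ^ d t := by
    intro t
    rw [map_pow, auxX lam hlam σ hσ, mul_pow, ← C_pow, ← zpow_natCast (lam t ^ k),
      ← zpow_mul]
  simp only [h]
  rw [Finset.prod_mul_distrib,
    show (∏ x : Fin n, (C (lam x ^ (k * (d x : ℤ))) : MvPolynomial (Fin n) F))
        = C (∏ x, lam x ^ (k * (d x : ℤ))) from (map_prod (C : F →+* MvPolynomial (Fin n) F) _ _).symm]
  rw [monomial_eq, Finsupp.prod_fintype _ _ (fun t => pow_zero (X t)),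
    show (C ((∏ x, lam x ^ (k * (d x : ℤ))) * a) : MvPolynomial (Fin n) F)
        = C (∏ x, lam x ^ (k * (d x : ℤ))) * C a from map_mul C _ _]
  ring

/-- The spread set `Spr_σ(p,q) = {k ∈ ℤ | σᵏ(p) = c·q for some c ∈ F∖{0}}`. -/
def Spr {F : Type*} [Field F] {n : ℕ}
    (σ : MvPolynomial (Fin n) F ≃ₐ[F] MvPolynomial (Fin n) F)
    (p q : MvPolynomial (Fin n) F) : Set ℤ :=
  {k : ℤ | ∃ c : F, c ≠ 0 ∧ (σ ^ k) p = C c * q}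

/-- Let `σ` be the `F`-algebra automorphism of `F[α₁,…,αₙ]` with
`σ(αᵢ) = λᵢ αᵢ` (all `λᵢ` nonzero). Let `m ≠ v` be multi-indices, `p₀, q₀ ∈ F∖{0}`, and
`p = α^m + p₀·α^v`, `q = α^m + q₀·α^v`. Then for every `k ∈ ℤ`: `k ∈ Spr_σ(p,q)` iff
`∏ₜ λₜ^{k(mₜ−vₜ)} = p₀/q₀`; moreover in that case the unique scalar `c` with
`σᵏ(p) = c·q` is `c = ∏ₜ λₜ^{k·mₜ}`. -/
theorem stmt_7 {F : Type*} [Field F] [Algebra F (AlgebraicClosure ℚ)]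
    {n : ℕ} (hn : 1 ≤ n)
    (lam : Fin n → F) (hlam : ∀ i, lam i ≠ 0)
    (σ : MvPolynomial (Fin n) F ≃ₐ[F] MvPolynomial (Fin n) F)
    (hσ : ∀ i, σ (X i) = C (lam i) * X i)
    (m v : Fin n →₀ ℕ) (hmv : m ≠ v)
    (p₀ q₀ : F) (hp₀ : p₀ ≠ 0) (hq₀ : q₀ ≠ 0)
    (k : ℤ) :
    (k ∈ Spr σ (monomial m (1 : F) + monomial v p₀)
               (monomial m (1 : F) + monomial v q₀) ↔
      (∏ t, lam t ^ (k * ((m t : ℤ) - (v t : ℤ)))) = p₀ / q₀) ∧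
    (∀ c : F, c ≠ 0 →
      (σ ^ k) (monomial m (1 : F) + monomial v p₀) =
        C c * (monomial m (1 : F) + monomial v q₀) →
      c = ∏ t, lam t ^ (k * (m t : ℤ))) := by
  set Λm : F := ∏ t, lam t ^ (k * (m t : ℤ)) with hΛm
  set Λv : F := ∏ t, lam t ^ (k * (v t : ℤ)) with hΛv
  have hΛmne : Λm ≠ 0 := Finset.prod_ne_zero_iff.2 fun t _ => zpow_ne_zero _ (hlam t)
  have hΛvne : Λv ≠ 0 := Finset.prod_ne_zero_iff.2 fun t _ => zpow_ne_zero _ (hlam t)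
  -- the image of p under σ^k
  have himg : (σ ^ k) (monomial m (1 : F) + monomial v p₀)
      = monomial m Λm + monomial v (Λv * p₀) := by
    rw [map_add, auxMon lam hlam σ hσ, auxMon lam hlam σ hσ, mul_one]
  -- key equivalence of the polynomial equation with scalar equations
  have hkey : ∀ c : F, ((σ ^ k) (monomial m (1 : F) + monomial v p₀) =
      C c * (monomial m (1 : F) + monomial v q₀)) ↔ (c = Λm ∧ Λv * p₀ = c * q₀) := by
    intro c
    rw [himg, mul_add, C_mul_monomial, C_mul_monomial, mul_one]
    constructor
    · intro h
      have h1 := congrArg (coeff m) h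
      have h2 := congrArg (coeff v) h
      simp only [coeff_add, coeff_monomial, if_pos rfl, if_neg hmv, if_neg (Ne.symm hmv)] at h1 h2
      rw [add_zero, add_zero] at h1
      rw [zero_add, zero_add] at h2
      simp only [if_true] at h1
      exact ⟨h1.symm, h2⟩
    · rintro ⟨h1, h2⟩
      subst h1; rw [h2]
  -- the quotient identity
  have hquot : Λm / Λv = ∏ t, lam t ^ (k * ((m t : ℤ) - (v t : ℤ))) := by
    rw [hΛm, hΛv, ← Finset.prod_div_distrib]
    refine Finset.prod_congr rfl fun t _ => ?_
    rw [← zpow_sub₀ (hlam t)]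
    ring_nf
  constructor
  · constructor
    · rintro ⟨c, hc, heq⟩
      obtain ⟨h1, h2⟩ := (hkey c).1 heq
      rw [← hquot]
      subst h1
      field_simp
      linear_combination -h2
    · intro h
      refine ⟨Λm, hΛmne, (hkey Λm).2 ⟨rfl, ?_⟩⟩
      rw [← hquot] at h
      field_simp at h
      linear_combination -h
  · intro c hc heq
    exact ((hkey c).1 heq).1
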